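/- Let E be an elliptic curve over a field K given by y² = x³ + αx² + βx, let E′: y² = x³ − 2αx² + (α² − 4β)x, and let δ: E′(K) → K×/(K×)² be the map sending O to 1, (0,0) to the class of α² − 4β, and any other point (x,y) to the class of x. Then δ is a group homomorphism. -/

import Mathlib

private lemma sq_class_eq' {K : Type*} [Field K] {x y : K} (hx : x ≠ 0) (hy : y ≠ 0)
    (u : K) (hu : u ≠ 0) (h : x * u ^ 2 = y) :
    (QuotientGroup.mk (Units.mk0 y hy) : Kˣ ⧸ (powMonoidHom 2 : Kˣ →* Kˣ).range) =
      QuotientGroup.mk (Units.mk0 x hx) := by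
  rw [QuotientGroup.eq]
  refine ⟨(Units.mk0 u hu)⁻¹, ?_⟩
  ext
  simp only [powMonoidHom_apply, Units.val_pow_eq_pow_val, Units.val_inv_eq_inv_val,
    Units.val_mul, Units.val_mk0, inv_pow]
  field_simp
  linear_combination -h

private lemma class_mul_self' {K : Type*} [Field K] (u : Kˣ) :
    (QuotientGroup.mk u : Kˣ ⧸ (powMonoidHom 2 : Kˣ →* Kˣ).range) * QuotientGroup.mk u = 1 := by
  rw [← QuotientGroup.mk_mul, QuotientGroup.eq_one_iff]
  exact ⟨u, by simp [powMonoidHom, sq]⟩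

private lemma class_mul' {K : Type*} [Field K] {x y : K} (hx : x ≠ 0) (hy : y ≠ 0) :
    (QuotientGroup.mk (Units.mk0 x hx) : Kˣ ⧸ (powMonoidHom 2 : Kˣ →* Kˣ).range) *
      QuotientGroup.mk (Units.mk0 y hy) =
      QuotientGroup.mk (Units.mk0 (x * y) (mul_ne_zero hx hy)) := by
  rw [← QuotientGroup.mk_mul]
  congr 1
  exact Units.ext rfl

private lemma key_identities {K : Type*} [Field K] (a b x₁ x₂ y₁ y₂ ℓ : K)
    (e₁ : y₁ ^ 2 = x₁ ^ 3 + a * x₁ ^ 2 + b * x₁)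
    (e₂ : y₂ ^ 2 = x₂ ^ 3 + a * x₂ ^ 2 + b * x₂)
    (hs : (x₁ ≠ x₂ ∧ ℓ * (x₁ - x₂) = y₁ - y₂) ∨
      (x₁ = x₂ ∧ y₁ = y₂ ∧ 2 * y₁ ≠ 0 ∧ ℓ * (2 * y₁) = 3 * x₁ ^ 2 + 2 * a * x₁ + b)) :
    x₁ * x₂ * (ℓ ^ 2 - a - x₁ - x₂) = (y₁ - ℓ * x₁) ^ 2 ∧
      x₁ * x₂ + (x₁ + x₂) * (ℓ ^ 2 - a - x₁ - x₂) = b - 2 * ℓ * (y₁ - ℓ * x₁) := by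
  rcases hs with ⟨hx, hs⟩ | ⟨rfl, rfl, h2y, hs⟩
  · have hd : x₁ - x₂ ≠ 0 := sub_ne_zero.mpr hx
    constructor
    · apply mul_left_cancel₀ (pow_ne_zero 2 hd)
      linear_combination ((x₁ - x₂) * x₂) * e₁ - ((x₁ - x₂) * x₁) * e₂ +
        (x₁ * x₂ * (ℓ * (x₁ - x₂) + y₁ - y₂) +
          x₁ * (2 * y₁ * (x₁ - x₂) - x₁ * ℓ * (x₁ - x₂) - x₁ * (y₁ - y₂))) * hs
    · apply mul_left_cancel₀ (pow_ne_zero 2 hd)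
      linear_combination (x₁ - x₂) * e₁ - (x₁ - x₂) * e₂ +
        ((x₁ + x₂) * (ℓ * (x₁ - x₂) + y₁ - y₂) + 2 * y₁ * (x₁ - x₂) -
          2 * x₁ * (ℓ * (x₁ - x₂) + y₁ - y₂)) * hs
  · constructor
    · apply mul_left_cancel₀ (pow_ne_zero 2 h2y)
      linear_combination (x₁ ^ 2 * (2 * y₁ * ℓ + (3 * x₁ ^ 2 + 2 * a * x₁ + b)) +
          x₁ * (4 * y₁ ^ 2 - 2 * y₁ * ℓ * x₁ - (3 * x₁ ^ 2 + 2 * a * x₁ + b) * x₁)) * hs +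
        (-(4 * y₁ ^ 2) - 4 * (x₁ ^ 3 + a * x₁ ^ 2 + b * x₁) +
          4 * (3 * x₁ ^ 2 + 2 * a * x₁ + b) * x₁ - 4 * x₁ ^ 2 * (a + 2 * x₁)) * e₁
    · apply mul_left_cancel₀ (pow_ne_zero 2 h2y)
      linear_combination (4 * y₁ ^ 2) * hs

open scoped Classical in
open WeierstrassCurve.Affine WeierstrassCurve.Affine.Point in
/-- For `E : y² = x³ + αx² + βx` and `E′ : y² = x³ - 2αx² + (α² - 4β)x` over a field `K`
with `β(α² - 4β) ≠ 0`, the map `δ : E′(K) → K×/(K×)²` sending `O ↦ 1`, `(0,0) ↦ α² - 4β`,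
and any other point `(x, y) ↦ x`, is a group homomorphism. -/
theorem stmt_16 {K : Type*} [Field K] (α β : K) (hβ : β * (α ^ 2 - 4 * β) ≠ 0)
    (hd : α ^ 2 - 4 * β ≠ 0) :
    ∀ W' : WeierstrassCurve K,
      W' = { a₁ := 0, a₂ := -2 * α, a₃ := 0, a₄ := α ^ 2 - 4 * β, a₆ := 0 } →
      ∀ f : W'.toAffine.Point → Kˣ ⧸ (powMonoidHom 2 : Kˣ →* Kˣ).range,
        f 0 = 1 →
        (∀ h00 : W'.toAffine.Nonsingular 0 0,
          f (WeierstrassCurve.Affine.Point.some 0 0 h00) =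
            QuotientGroup.mk (Units.mk0 (α ^ 2 - 4 * β) hd)) →
        (∀ (x y : K) (hxy : W'.toAffine.Nonsingular x y) (hx : x ≠ 0),
          f (WeierstrassCurve.Affine.Point.some x y hxy) = QuotientGroup.mk (Units.mk0 x hx)) →
        ∀ P Q : W'.toAffine.Point, f (P + Q) = f P * f Q := by
  intro W' hW' f hf0 hf00 hfx P Q
  have ha1 : W'.toAffine.a₁ = 0 := by rw [hW']
  have ha2 : W'.toAffine.a₂ = -2 * α := by rw [hW']
  have ha3 : W'.toAffine.a₃ = 0 := by rw [hW']
  have ha4 : W'.toAffine.a₄ = α ^ 2 - 4 * β := by rw [hW']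
  have ha6 : W'.toAffine.a₆ = 0 := by rw [hW']
  have hneg : ∀ x y : K, W'.toAffine.negY x y = -y := by
    intro x y; rw [WeierstrassCurve.Affine.negY, ha1, ha3]; ring
  have heq : ∀ x y : K, W'.toAffine.Equation x y →
      y ^ 2 = x ^ 3 + (-2 * α) * x ^ 2 + (α ^ 2 - 4 * β) * x := by
    intro x y h
    have h' := (W'.toAffine.equation_iff x y).mp h
    rw [ha1, ha2, ha3, ha4, ha6] at h'
    linear_combination h'
  have hy0 : ∀ y : K, W'.toAffine.Equation 0 y → y = 0 := by
    intro y h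
    have h' : y ^ 2 = 0 := by linear_combination heq 0 y h
    exact pow_eq_zero_iff two_ne_zero |>.mp h'
  have hfZ : ∀ (x y : K) (h : W'.toAffine.Nonsingular x y), x = 0 →
      f (WeierstrassCurve.Affine.Point.some x y h) =
        QuotientGroup.mk (Units.mk0 (α ^ 2 - 4 * β) hd) := by
    intro x y h hx
    subst hx
    have hy : y = 0 := hy0 y h.1
    subst hy
    exact hf00 h
  cases P with
  | zero => rw [← zero_def, zero_add, hf0]; exact (one_mul (f Q)).symm
  | @some x₁ y₁ h₁ =>
    cases Q with
    | zero =>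
      rw [← zero_def, add_zero, hf0]
      exact (mul_one (f (WeierstrassCurve.Affine.Point.some _ _ h₁))).symm
    | @some x₂ y₂ h₂ =>
      have e₁ := heq x₁ y₁ h₁.1
      have e₂ := heq x₂ y₂ h₂.1
      by_cases hv : x₁ = x₂ ∧ y₁ = W'.toAffine.negY x₂ y₂
      · obtain ⟨hx, hy⟩ := hv
        rw [add_of_Y_eq hx hy, hf0]
        subst hx
        by_cases h1 : x₁ = 0
        · rw [hfZ _ _ h₁ h1, hfZ _ _ h₂ h1]
          exact (class_mul_self' _).symm
        · rw [hfx _ _ h₁ h1, hfx _ _ h₂ h1]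
          exact (class_mul_self' _).symm
      · have hxy : x₁ = x₂ → y₁ ≠ W'.toAffine.negY x₂ y₂ := fun hx hy => hv ⟨hx, hy⟩
        rw [add_some hv]
        set ℓ := W'.toAffine.slope x₁ x₂ y₁ y₂ with hℓ
        have hX : W'.toAffine.addX x₁ x₂ ℓ = ℓ ^ 2 - (-2 * α) - x₁ - x₂ := by
          rw [WeierstrassCurve.Affine.addX, ha1, ha2]; ring
        have hs : (x₁ ≠ x₂ ∧ ℓ * (x₁ - x₂) = y₁ - y₂) ∨
            (x₁ = x₂ ∧ y₁ = y₂ ∧ 2 * y₁ ≠ 0 ∧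
              ℓ * (2 * y₁) = 3 * x₁ ^ 2 + 2 * (-2 * α) * x₁ + (α ^ 2 - 4 * β)) := by
          by_cases hx : x₁ = x₂
          · right
            have hyne := hxy hx
            have hy12 : y₁ = y₂ := Y_eq_of_Y_ne h₁.1 h₂.1 hx hyne
            have h2y : 2 * y₁ ≠ 0 := by
              intro h0
              apply hyne
              rw [hneg, ← hy12]
              linear_combination h0
            refine ⟨hx, hy12, h2y, ?_⟩
            have hsl := slope_of_Y_ne hx hyne
            rw [hneg, ha1, ha2, ha4] at hsl
            rw [hℓ, hsl, div_mul_eq_mul_div, div_eq_iff (show y₁ - -y₁ ≠ 0 by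
              intro h; exact h2y (by linear_combination h))]
            ring
          · left
            refine ⟨hx, ?_⟩
            rw [hℓ, slope_of_X_ne hx]
            exact div_mul_cancel₀ _ (sub_ne_zero.mpr hx)
        obtain ⟨hA, hB⟩ := key_identities (-2 * α) (α ^ 2 - 4 * β) x₁ x₂ y₁ y₂ ℓ e₁ e₂ hs
        rw [← hX] at hA hB
        by_cases h1 : x₁ = 0
        · -- P = (0, 0)
          have hy1 : y₁ = 0 := hy0 y₁ (h1 ▸ h₁.1)
          have h2 : x₂ ≠ 0 := by
            intro h20
            exact hxy (h1.trans h20.symm) (by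
              rw [hneg, hy1, hy0 y₂ (h20 ▸ h₂.1)]; ring)
          have hν : y₁ - ℓ * x₁ = 0 := by rw [hy1, h1]; ring
          have hbx : x₂ * W'.toAffine.addX x₁ x₂ ℓ = α ^ 2 - 4 * β := by
            linear_combination hB - 2 * ℓ * hν - (x₂ + W'.toAffine.addX x₁ x₂ ℓ) * h1
          have hXne : W'.toAffine.addX x₁ x₂ ℓ ≠ 0 := by
            intro h0
            exact hd (by rw [← hbx, h0, mul_zero])
          rw [hfx _ _ _ hXne, hfZ _ _ h₁ h1, hfx _ _ h₂ h2]
          exact (sq_class_eq' (mul_ne_zero hd h2) hXne x₂⁻¹ (inv_ne_zero h2) (by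
            field_simp
            linear_combination -hbx)).trans (class_mul' hd h2).symm
        · by_cases h2 : x₂ = 0
          · -- Q = (0, 0)
            have hν2 : (y₁ - ℓ * x₁) ^ 2 = 0 := by rw [← hA, h2]; ring
            have hν : y₁ - ℓ * x₁ = 0 := pow_eq_zero_iff two_ne_zero |>.mp hν2
            have hbx : x₁ * W'.toAffine.addX x₁ x₂ ℓ = α ^ 2 - 4 * β := by
              linear_combination hB - 2 * ℓ * hν - (x₁ + W'.toAffine.addX x₁ x₂ ℓ) * h2
            have hXne : W'.toAffine.addX x₁ x₂ ℓ ≠ 0 := by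
              intro h0
              exact hd (by rw [← hbx, h0, mul_zero])
            rw [hfx _ _ _ hXne, hfx _ _ h₁ h1, hfZ _ _ h₂ h2]
            exact (sq_class_eq' (mul_ne_zero h1 hd) hXne x₁⁻¹ (inv_ne_zero h1) (by
              field_simp
              linear_combination -hbx)).trans (class_mul' h1 hd).symm
          · by_cases h3 : W'.toAffine.addX x₁ x₂ ℓ = 0
            · -- P + Q = (0, 0)
              have hν2 : (y₁ - ℓ * x₁) ^ 2 = 0 := by rw [← hA, h3]; ring
              have hν : y₁ - ℓ * x₁ = 0 := pow_eq_zero_iff two_ne_zero |>.mp hν2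
              have hb12 : x₁ * x₂ = α ^ 2 - 4 * β := by
                linear_combination hB - (x₁ + x₂) * h3 - 2 * ℓ * hν
              rw [hfZ _ _ _ h3, hfx _ _ h₁ h1, hfx _ _ h₂ h2]
              exact (sq_class_eq' (mul_ne_zero h1 h2) hd 1 one_ne_zero (by
                linear_combination hb12)).trans (class_mul' h1 h2).symm
            · -- generic case
              have hν : y₁ - ℓ * x₁ ≠ 0 := by
                intro h0
                apply h3
                have h00 : x₁ * x₂ * W'.toAffine.addX x₁ x₂ ℓ = 0 := by rw [hA, h0]; ring
                exact (mul_eq_zero.mp h00).resolve_left (mul_ne_zero h1 h2)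
              rw [hfx _ _ _ h3, hfx _ _ h₁ h1, hfx _ _ h₂ h2]
              exact (sq_class_eq' (mul_ne_zero h1 h2) h3
                ((y₁ - ℓ * x₁) / (x₁ * x₂)) (div_ne_zero hν (mul_ne_zero h1 h2)) (by
                  field_simp
                  linear_combination -hA)).trans (class_mul' h1 h2).symm
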